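/- Let E be a complex Banach space, ψ ∈ E* a nonzero continuous functional, and e ∈ E with ψ(e) ≠ 0 and ‖e‖ = 1. Define a product on E by ab = ψ(b)x + ψ(a)y + ψ(a)ψ(b)e, where a = x + ψ(a)e and b = y + ψ(b)e with x, y ∈ ker ψ (after rescaling so ψ(e)=1). Then this product makes E a commutative algebra with identity e, and the norm ‖a‖₁ = |ψ(a)| + ‖x‖ is an algebra norm (submultiplicative) equivalent to the original norm on E. -/

import Mathlib

/-- A complex Banach space `E` becomes a commutative unital algebra: given
`ψ ∈ E*` with `ψ(e) = 1`, `‖e‖ = 1`, the product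
`a * b = ψ(b)x + ψ(a)y + ψ(a)ψ(b)e` (where `a = x + ψ(a)e`, `b = y + ψ(b)e`,
`x, y ∈ ker ψ`) is commutative, associative, bilinear, has identity `e`, and the
norm `‖a‖₁ = |ψ(a)| + ‖x‖` is submultiplicative and equivalent to the norm of `E`. -/
theorem banach_space_becomes_algebra
    (E : Type*) [NormedAddCommGroup E] [NormedSpace ℂ E] [CompleteSpace E]
    (ψ : E →L[ℂ] ℂ) (hψ : ψ ≠ 0) (e : E) (hψe : ψ e = 1) (he : ‖e‖ = 1) :
    ∀ mul : E → E → E,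
      (∀ a b : E, mul a b =
        ψ b • (a - ψ a • e) + ψ a • (b - ψ b • e) + (ψ a * ψ b) • e) →
      ∀ nrm : E → ℝ,
      (∀ a : E, nrm a = ‖ψ a‖ + ‖a - ψ a • e‖) →
      (∀ a b, mul a b = mul b a) ∧
      (∀ a b c, mul (mul a b) c = mul a (mul b c)) ∧
      (∀ a, mul a e = a) ∧
      (∀ a b c, mul (a + b) c = mul a c + mul b c) ∧
      (∀ (s : ℂ) (a b), mul (s • a) b = s • mul a b) ∧
      (∀ a b, nrm (mul a b) ≤ nrm a * nrm b) ∧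
      (∃ C₁ > (0 : ℝ), ∃ C₂ > (0 : ℝ),
        ∀ a, C₁ * ‖a‖ ≤ nrm a ∧ nrm a ≤ C₂ * ‖a‖) := by
  intro mul hmul nrm hnrm
  -- simplified product form
  have hmul' : ∀ a b : E, mul a b = ψ b • a + ψ a • b - (ψ a * ψ b) • e := by
    intro a b; rw [hmul]; module
  have hψmul : ∀ a b : E, ψ (mul a b) = ψ a * ψ b := by
    intro a b
    simp [hmul', map_sub, map_add, map_smul, hψe]
    ring
  refine ⟨?_, ?_, ?_, ?_, ?_, ?_, ?_⟩
  · intro a b; rw [hmul', hmul']; module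
  · intro a b c
    rw [hmul' (mul a b) c, hmul' a (mul b c), hψmul, hψmul,
      hmul' a b, hmul' b c]
    module
  · intro a; rw [hmul', hψe]; module
  · intro a b c
    rw [hmul', hmul', hmul']
    simp only [map_add]
    module
  · intro s a b
    rw [hmul', hmul']
    simp only [map_smul, smul_eq_mul]
    module
  · intro a b
    have key : mul a b - (ψ a * ψ b) • e =
        ψ b • (a - ψ a • e) + ψ a • (b - ψ b • e) := by
      rw [hmul']; module
    rw [hnrm, hnrm, hnrm, hψmul, key]
    have h1 : ‖ψ b • (a - ψ a • e) + ψ a • (b - ψ b • e)‖ ≤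
        ‖ψ b‖ * ‖a - ψ a • e‖ + ‖ψ a‖ * ‖b - ψ b • e‖ := by
      calc _ ≤ ‖ψ b • (a - ψ a • e)‖ + ‖ψ a • (b - ψ b • e)‖ := norm_add_le _ _
        _ = _ := by rw [norm_smul, norm_smul]
    have h2 : ‖ψ a * ψ b‖ = ‖ψ a‖ * ‖ψ b‖ :=
      norm_mul _ _
    have hx : (0:ℝ) ≤ ‖a - ψ a • e‖ := norm_nonneg _
    have hy : (0:ℝ) ≤ ‖b - ψ b • e‖ := norm_nonneg _
    nlinarith [norm_nonneg (a - ψ a • e), norm_nonneg (b - ψ b • e)]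
  · refine ⟨1, one_pos, 2 * ‖ψ‖ + 1, by positivity, fun a => ⟨?_, ?_⟩⟩
    · rw [hnrm, one_mul]
      calc ‖a‖ = ‖(a - ψ a • e) + ψ a • e‖ := by rw [sub_add_cancel]
        _ ≤ ‖a - ψ a • e‖ + ‖ψ a • e‖ := norm_add_le _ _
        _ ≤ ‖ψ a‖ + ‖a - ψ a • e‖ := by
            rw [norm_smul, he, mul_one]
            linarith [norm_nonneg (a - ψ a • e)]
    · rw [hnrm]
      have hψa : ‖ψ a‖ ≤ ‖ψ‖ * ‖a‖ := by
        exact ψ.le_opNorm a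
      have : ‖a - ψ a • e‖ ≤ ‖a‖ + ‖ψ‖ * ‖a‖ := by
        calc ‖a - ψ a • e‖ ≤ ‖a‖ + ‖ψ a • e‖ := norm_sub_le _ _
          _ ≤ ‖a‖ + ‖ψ‖ * ‖a‖ := by
              rw [norm_smul, he, mul_one]
              linarith
      linarith
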